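/- Let g ∈ L¹(ℝ), x₀ ≠ 0. If ∫_ℝ e^{−iπ y e^{t²}} g(t) dt = 0 for all y ∈ ℝ and ∫_ℝ e^{−iπ(x₀ t + y e^{t²})} g(t) dt = 0 for all y ∈ ℝ, then g = 0 a.e. (The exponential curve Γ = {(t, e^{t²})} paired with two distinct vertical lines is a Heisenberg uniqueness pair.) -/

import Mathlib

open MeasureTheory Real FourierTransform
open scoped ContDiff

/-- A smooth compactly supported function is a Schwartz map. -/
noncomputable def HUPaux.toSchwartz (ψ : ℝ → ℂ) (hs : ContDiff ℝ ∞ ψ)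
    (hc : HasCompactSupport ψ) : SchwartzMap ℝ ℂ where
  toFun := ψ
  smooth' := hs
  decay' := by
    intro k n
    have h1 : Continuous fun x : ℝ => ‖x‖ ^ k * ‖iteratedFDeriv ℝ n ψ x‖ :=
      ((continuous_norm).pow k).mul
        ((hs.continuous_iteratedFDeriv (by exact_mod_cast le_top)).norm)
    have h2 : HasCompactSupport fun x : ℝ => ‖x‖ ^ k * ‖iteratedFDeriv ℝ n ψ x‖ :=
      ((hc.iteratedFDeriv n).norm).mul_left
    obtain ⟨C, hC⟩ := h1.bounded_above_of_compact_support h2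
    refine ⟨C, fun x => ?_⟩
    have := hC x
    rwa [Real.norm_eq_abs, abs_of_nonneg (by positivity)] at this

lemma HUPaux.integrable_fourier (ψ : ℝ → ℂ) (hs : ContDiff ℝ ∞ ψ)
    (hc : HasCompactSupport ψ) : Integrable (𝓕 ψ) := by
  have : 𝓕 ψ = ((SchwartzMap.fourierTransformCLM ℂ) (HUPaux.toSchwartz ψ hs hc) : ℝ → ℂ) := by
    rw [SchwartzMap.fourierTransformCLM_apply]; rfl
  rw [this]
  exact ((SchwartzMap.fourierTransformCLM ℂ) (HUPaux.toSchwartz ψ hs hc)).integrable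

set_option maxHeartbeats 1000000 in
/-- Step 1: testing against `ψ(e^{t²})` for smooth compactly supported `ψ` gives zero. -/
lemma HUPaux.step1 (g : ℝ → ℂ) (hg : Integrable g)
    (h : ∀ y : ℝ,
      ∫ t : ℝ, Complex.exp (-(Complex.I * (Real.pi : ℂ) * (y : ℂ) * (Real.exp (t ^ 2) : ℂ)))
        * g t = 0)
    (ψ : ℝ → ℂ) (hs : ContDiff ℝ ∞ ψ) (hc : HasCompactSupport ψ) :
    ∫ t : ℝ, ψ (Real.exp (t ^ 2)) * g t = 0 := by
  set Φ := 𝓕 ψ with hΦdef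
  have hΦ : Integrable Φ := HUPaux.integrable_fourier ψ hs hc
  have hψint : Integrable ψ := hs.continuous.integrable_of_hasCompactSupport hc
  have hinv : ∀ u : ℝ, ψ u =
      ∫ ξ : ℝ, Complex.exp (-(Complex.I * (Real.pi : ℂ) * ((-2*ξ : ℝ) : ℂ) * (u : ℂ))) • Φ ξ := by
    intro u
    have h0 := hs.continuous.fourierInv_fourier_eq hψint hΦ
    have h1 : ψ u = 𝓕⁻ Φ u := by rw [h0]
    rw [h1, Real.fourierInv_eq']
    simp only [RCLike.inner_apply, conj_trivial]
    refine integral_congr_ae (Filter.Eventually.of_forall fun ξ => ?_)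
    have harg : ((2 * π * (u * ξ) : ℝ) : ℂ) * Complex.I
        = -(Complex.I * (Real.pi : ℂ) * ((-2*ξ : ℝ) : ℂ) * (u : ℂ)) := by
      push_cast; ring
    simp only [harg]
  set F : ℝ → ℝ → ℂ := fun t ξ =>
    Φ ξ * (Complex.exp (-(Complex.I * (Real.pi : ℂ) * ((-2*ξ : ℝ) : ℂ)
      * (Real.exp (t ^ 2) : ℂ))) * g t) with hFdef
  have hFint : Integrable (Function.uncurry F) (volume.prod volume) := by
    have hmul : Integrable (fun p : ℝ × ℝ => g p.1 * Φ p.2) (volume.prod volume) :=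
      hg.mul_prod hΦ
    have hexp : Continuous fun p : ℝ × ℝ =>
        Complex.exp (-(Complex.I * (Real.pi : ℂ) * ((-2*p.2 : ℝ) : ℂ)
          * (Real.exp (p.1 ^ 2) : ℂ))) := by fun_prop
    have hbd : Integrable (fun p : ℝ × ℝ =>
        Complex.exp (-(Complex.I * (Real.pi : ℂ) * ((-2*p.2 : ℝ) : ℂ)
          * (Real.exp (p.1 ^ 2) : ℂ))) * (g p.1 * Φ p.2)) (volume.prod volume) := by
      apply hmul.bdd_mul (c := 1) hexp.aestronglyMeasurable
      refine Filter.Eventually.of_forall fun p => ?_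
      have heq : -(Complex.I * (Real.pi : ℂ) * ((-2*p.2 : ℝ) : ℂ) * (Real.exp (p.1 ^ 2) : ℂ))
          = ((-(Real.pi * (-2*p.2) * Real.exp (p.1 ^ 2)) : ℝ) : ℂ) * Complex.I := by
        push_cast; ring
      rw [heq, Complex.norm_exp_ofReal_mul_I]
    exact hbd.congr (Filter.Eventually.of_forall fun p => by
      simp only [Function.uncurry, hFdef]; ring)
  calc ∫ t : ℝ, ψ (Real.exp (t ^ 2)) * g t
      = ∫ t : ℝ, ∫ ξ : ℝ, F t ξ := by
        refine integral_congr_ae (Filter.Eventually.of_forall fun t => ?_)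
        show ψ (Real.exp (t ^ 2)) * g t = ∫ ξ : ℝ, F t ξ
        rw [hinv (Real.exp (t ^ 2)), ← integral_mul_const]
        refine integral_congr_ae (Filter.Eventually.of_forall fun ξ => ?_)
        simp only [hFdef, smul_eq_mul]
        ring
    _ = ∫ ξ : ℝ, ∫ t : ℝ, F t ξ := integral_integral_swap hFint
    _ = ∫ ξ : ℝ, Φ ξ * ∫ t : ℝ,
          Complex.exp (-(Complex.I * (Real.pi : ℂ) * ((-2*ξ : ℝ) : ℂ)
            * (Real.exp (t ^ 2) : ℂ))) * g t := by
        refine integral_congr_ae (Filter.Eventually.of_forall fun ξ => ?_)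
        simp only [hFdef]
        rw [integral_const_mul]
    _ = 0 := by
        have hz : ∀ ξ : ℝ, (∫ t : ℝ, Complex.exp (-(Complex.I * (Real.pi : ℂ)
            * ((-2*ξ : ℝ) : ℂ) * (Real.exp (t ^ 2) : ℂ))) * g t) = 0 := fun ξ => h (-2*ξ)
        simp only [hz, mul_zero, integral_zero]

/-- Step 2: testing against `χ(|t|)` for `χ` compactly supported in `(0,∞)` gives zero. -/
lemma HUPaux.step2 (g : ℝ → ℂ) (hg : Integrable g)
    (h : ∀ y : ℝ,
      ∫ t : ℝ, Complex.exp (-(Complex.I * (Real.pi : ℂ) * (y : ℂ) * (Real.exp (t ^ 2) : ℂ)))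
        * g t = 0)
    (χ : ℝ → ℝ) (hχs : ContDiff ℝ ∞ χ) (hχc : HasCompactSupport χ)
    (hsupp : tsupport χ ⊆ Set.Ioi 0) :
    ∫ t : ℝ, (χ |t| : ℂ) * g t = 0 := by
  -- find ε > 0 such that χ vanishes on (-ε, ε)
  have h0 : (0 : ℝ) ∉ tsupport χ := fun h0 => (lt_irrefl 0 (Set.mem_Ioi.1 (hsupp h0)))
  obtain ⟨ε, hε, hball⟩ := Metric.isOpen_iff.1 (isClosed_tsupport χ).isOpen_compl 0 h0
  have hχ0 : ∀ x : ℝ, |x| < ε → χ x = 0 := by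
    intro x hx
    apply image_eq_zero_of_notMem_tsupport
    exact hball (by simpa [Real.dist_eq] using hx)
  -- the test function on the u-axis
  set ψ : ℝ → ℂ := fun u => if 0 < u then (χ (Real.sqrt (Real.log u)) : ℂ) else 0 with hψdef
  have hεsq : (1 : ℝ) < Real.exp (ε ^ 2) := by
    rw [← Real.exp_zero]
    exact Real.exp_lt_exp.2 (by positivity)
  have hz : ∀ u : ℝ, u < Real.exp (ε ^ 2) → ψ u = 0 := by
    intro u hu
    simp only [hψdef]
    split_ifs with h'
    · have hlt : Real.sqrt (Real.log u) < ε := by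
        rcases le_or_gt u 1 with h1 | h1
        · rw [Real.sqrt_eq_zero'.mpr (Real.log_nonpos (le_of_lt h') h1)]
          exact hε
        · rw [Real.sqrt_lt' hε]
          have := Real.log_lt_log h' hu
          simpa [Real.log_exp] using this
      rw [hχ0 _ (by rwa [abs_of_nonneg (Real.sqrt_nonneg _)])]
      norm_num
    · rfl
  -- smoothness of ψ
  have hψs : ContDiff ℝ ∞ ψ := by
    rw [contDiff_iff_contDiffAt]
    intro u
    rcases lt_or_ge u (Real.exp (ε ^ 2)) with hu | hu
    · have heq : ψ =ᶠ[nhds u] fun _ => (0 : ℂ) := by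
        filter_upwards [Iio_mem_nhds hu] with v hv
        exact hz v hv
      exact (contDiffAt_const (c := (0:ℂ))).congr_of_eventuallyEq heq
    · have hu1 : (1 : ℝ) < u := lt_of_lt_of_le hεsq hu
      have hu0 : (0 : ℝ) < u := lt_trans zero_lt_one hu1
      have heq : ψ =ᶠ[nhds u] fun v => ((χ (Real.sqrt (Real.log v)) : ℝ) : ℂ) := by
        filter_upwards [Ioi_mem_nhds hu0] with v hv
        simp only [hψdef, if_pos (Set.mem_Ioi.1 hv)]
      have hlog : ContDiffAt ℝ ∞ Real.log u := Real.contDiffAt_log.2 (ne_of_gt hu0)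
      have hsqrt : ContDiffAt ℝ ∞ Real.sqrt (Real.log u) :=
        Real.contDiffAt_sqrt (ne_of_gt (Real.log_pos hu1))
      have hχat : ContDiffAt ℝ ∞ χ (Real.sqrt (Real.log u)) := hχs.contDiffAt
      have hc : ContDiffAt ℝ ∞ (fun v => ((χ (Real.sqrt (Real.log v)) : ℝ) : ℂ)) u :=
        (Complex.ofRealCLM.contDiff.contDiffAt).comp u
          ((hχat.comp u (hsqrt.comp u hlog)))
      exact hc.congr_of_eventuallyEq heq
  -- compact support of ψ
  have hbdd : BddAbove (tsupport χ) := hχc.isCompact.bddAbove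
  set M := sSup (tsupport χ) with hMdef
  have hψc : HasCompactSupport ψ := by
    apply HasCompactSupport.intro (isCompact_Icc (a := (0:ℝ)) (b := Real.exp (M ^ 2)))
    intro u hu
    by_contra hne
    apply hu
    have hupos : 0 < u := by
      by_contra h'
      apply hne
      simp only [hψdef, if_neg h']
    have hval : χ (Real.sqrt (Real.log u)) ≠ 0 := by
      intro hzero
      apply hne
      simp only [hψdef, if_pos hupos, hzero, Complex.ofReal_zero]
    have hmem : Real.sqrt (Real.log u) ∈ tsupport χ :=
      subset_tsupport _ (Function.mem_support.mpr hval)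
    have hle : Real.sqrt (Real.log u) ≤ M := le_csSup hbdd hmem
    have hM0 : 0 ≤ M := le_trans (Real.sqrt_nonneg _) hle
    have hlogle : Real.log u ≤ M ^ 2 := by
      rcases le_or_gt (Real.log u) 0 with h' | h'
      · exact le_trans h' (by positivity)
      · calc Real.log u = (Real.sqrt (Real.log u)) ^ 2 := (Real.sq_sqrt h'.le).symm
          _ ≤ M ^ 2 := by
              have := pow_le_pow_left₀ (Real.sqrt_nonneg _) hle 2
              exact this
    refine ⟨hupos.le, ?_⟩
    calc u = Real.exp (Real.log u) := (Real.exp_log hupos).symm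
      _ ≤ Real.exp (M ^ 2) := Real.exp_le_exp.2 hlogle
  -- conclude by Step 1
  have key := HUPaux.step1 g hg h ψ hψs hψc
  calc ∫ t : ℝ, (χ |t| : ℂ) * g t = ∫ t : ℝ, ψ (Real.exp (t ^ 2)) * g t := by
        refine integral_congr_ae (Filter.Eventually.of_forall fun t => ?_)
        have hpos : (0 : ℝ) < Real.exp (t ^ 2) := Real.exp_pos _
        simp [hψdef, if_pos hpos, Real.log_exp, Real.sqrt_sq_eq_abs]
    _ = 0 := key

/-- Step 3: the measure `g(t)dt` whose transform vanishes on the line `x = 0` is odd. -/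
lemma HUPaux.odd (g : ℝ → ℂ) (hg : Integrable g)
    (h : ∀ y : ℝ,
      ∫ t : ℝ, Complex.exp (-(Complex.I * (Real.pi : ℂ) * (y : ℂ) * (Real.exp (t ^ 2) : ℂ)))
        * g t = 0) :
    ∀ᵐ t : ℝ, g (-t) = - g t := by
  have hgneg : Integrable fun t => g (-t) := hg.comp_neg
  have hF : Integrable fun t => g t + g (-t) := hg.add hgneg
  have key : ∀ᵐ t : ℝ, t ∈ Set.Ioi (0:ℝ) → g t + g (-t) = 0 := by
    refine isOpen_Ioi.ae_eq_zero_of_integral_contDiff_smul_eq_zero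
      (hF.locallyIntegrable.locallyIntegrableOn _) ?_
    intro χ hχs hχc hsupp
    have hχ0 : χ 0 = 0 :=
      image_eq_zero_of_notMem_tsupport (fun h0 => lt_irrefl 0 (Set.mem_Ioi.1 (hsupp h0)))
    obtain ⟨C, hC⟩ := (hχs.continuous.norm).bounded_above_of_compact_support hχc.norm
    have hCmem : ∀ x : ℝ, ‖((χ x : ℝ) : ℂ)‖ ≤ C := fun x => by
      simpa using hC x
    have hmeas1 : AEStronglyMeasurable (fun t : ℝ => ((χ t : ℝ) : ℂ)) volume :=
      (Complex.continuous_ofReal.comp hχs.continuous).aestronglyMeasurable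
    have hmeas2 : AEStronglyMeasurable (fun t : ℝ => ((χ (-t) : ℝ) : ℂ)) volume :=
      (Complex.continuous_ofReal.comp (hχs.continuous.comp continuous_neg)).aestronglyMeasurable
    have hint1 : Integrable fun t : ℝ => ((χ t : ℝ) : ℂ) * g t :=
      hg.bdd_mul hmeas1 (Filter.Eventually.of_forall hCmem)
    have hint2 : Integrable fun t : ℝ => ((χ t : ℝ) : ℂ) * g (-t) :=
      hgneg.bdd_mul hmeas1 (Filter.Eventually.of_forall hCmem)
    have hint3 : Integrable fun t : ℝ => ((χ (-t) : ℝ) : ℂ) * g t :=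
      hg.bdd_mul hmeas2 (Filter.Eventually.of_forall fun x => hCmem (-x))
    have e2 : (∫ t : ℝ, ((χ t : ℝ) : ℂ) * g (-t)) = ∫ t : ℝ, ((χ (-t) : ℝ) : ℂ) * g t := by
      rw [← integral_neg_eq_self (fun t : ℝ => ((χ (-t) : ℝ) : ℂ) * g t) volume]
      simp only [neg_neg]
    have e3 : ∀ t : ℝ, ((χ t : ℝ) : ℂ) * g t + ((χ (-t) : ℝ) : ℂ) * g t
        = ((χ |t| : ℝ) : ℂ) * g t := by
      intro t
      rcases lt_trichotomy t 0 with ht | ht | ht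
      · have hz1 : χ t = 0 := by
          apply image_eq_zero_of_notMem_tsupport
          intro hc
          exact absurd (hsupp hc) (by simpa using ht.le)
        rw [hz1, abs_of_neg ht]
        push_cast
        ring
      · subst ht
        simp [hχ0]
      · have hz1 : χ (-t) = 0 := by
          apply image_eq_zero_of_notMem_tsupport
          intro hc
          have := hsupp hc
          simp only [Set.mem_Ioi] at this
          linarith
        rw [hz1, abs_of_pos ht]
        push_cast
        ring
    calc ∫ t : ℝ, χ t • (g t + g (-t))
        = ∫ t : ℝ, (((χ t : ℝ) : ℂ) * g t + ((χ t : ℝ) : ℂ) * g (-t)) := by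
          refine integral_congr_ae (Filter.Eventually.of_forall fun t => ?_)
          simp only [Complex.real_smul, mul_add]
      _ = (∫ t : ℝ, ((χ t : ℝ) : ℂ) * g t) + ∫ t : ℝ, ((χ t : ℝ) : ℂ) * g (-t) :=
          integral_add hint1 hint2
      _ = (∫ t : ℝ, ((χ t : ℝ) : ℂ) * g t) + ∫ t : ℝ, ((χ (-t) : ℝ) : ℂ) * g t := by rw [e2]
      _ = ∫ t : ℝ, (((χ t : ℝ) : ℂ) * g t + ((χ (-t) : ℝ) : ℂ) * g t) :=
          (integral_add hint1 hint3).symm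
      _ = ∫ t : ℝ, ((χ |t| : ℝ) : ℂ) * g t :=
          integral_congr_ae (Filter.Eventually.of_forall e3)
      _ = 0 := HUPaux.step2 g hg h χ hχs hχc hsupp
  have hmp : MeasurePreserving (fun t : ℝ => -t) volume volume :=
    Measure.measurePreserving_neg _
  have key2 : ∀ᵐ t : ℝ, -t ∈ Set.Ioi (0:ℝ) → g (-t) + g (-(-t)) = 0 :=
    hmp.quasiMeasurePreserving.ae key
  have h0 : ∀ᵐ t : ℝ, t ≠ (0:ℝ) := by
    have hvol : volume ({(0:ℝ)} : Set ℝ) = 0 := Real.volume_singleton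
    rw [ae_iff]
    simpa [ne_eq, not_not, Set.setOf_eq_eq_singleton] using hvol
  filter_upwards [key, key2, h0] with t ht1 ht2 ht0
  rcases lt_or_gt_of_ne ht0 with ht | ht
  · have := ht2 (by simpa using ht)
    rw [neg_neg] at this
    linear_combination this
  · have := ht1 ht
    linear_combination this

/-- The exponential curve `{(t, e^{t²}) : t ∈ ℝ}` together with the two vertical lines
`x = 0` and `x = x₀` (`x₀ ≠ 0`) is a Heisenberg uniqueness pair: if the Fourier transform of
`g(t)dt` on the curve vanishes on both lines, then `g = 0` a.e. -/
theorem exp_curve_two_vertical_lines_HUP (g : ℝ → ℂ) (hg : Integrable g)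
    (x₀ : ℝ) (hx₀ : x₀ ≠ 0)
    (h1 : ∀ y : ℝ,
      ∫ t : ℝ, Complex.exp (-(Complex.I * (Real.pi : ℂ) * (y : ℂ) * (Real.exp (t ^ 2) : ℂ)))
        * g t = 0)
    (h2 : ∀ y : ℝ,
      ∫ t : ℝ, Complex.exp (-(Complex.I * (Real.pi : ℂ)
        * ((x₀ : ℂ) * (t : ℂ) + (y : ℂ) * (Real.exp (t ^ 2) : ℂ)))) * g t = 0) :
    g =ᵐ[volume] 0 := by
  set g₂ : ℝ → ℂ := fun t => Complex.exp (-(Complex.I * (Real.pi : ℂ) * (x₀ : ℂ) * (t : ℂ)))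
    * g t with hg₂def
  have hg₂ : Integrable g₂ := by
    apply hg.bdd_mul (c := 1)
    · exact (Complex.continuous_exp.comp (by fun_prop)).aestronglyMeasurable
    · refine Filter.Eventually.of_forall fun t => ?_
      have heq : -(Complex.I * (Real.pi : ℂ) * (x₀ : ℂ) * (t : ℂ))
          = ((-(Real.pi * x₀ * t) : ℝ) : ℂ) * Complex.I := by push_cast; ring
      rw [heq, Complex.norm_exp_ofReal_mul_I]
  have h2' : ∀ y : ℝ,
      ∫ t : ℝ, Complex.exp (-(Complex.I * (Real.pi : ℂ) * (y : ℂ) * (Real.exp (t ^ 2) : ℂ)))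
        * g₂ t = 0 := by
    intro y
    rw [← h2 y]
    refine integral_congr_ae (Filter.Eventually.of_forall fun t => ?_)
    rw [hg₂def]
    simp only [← mul_assoc, ← Complex.exp_add]
    congr 2
    ring
  have hodd1 := HUPaux.odd g hg h1
  have hodd2 := HUPaux.odd g₂ hg₂ h2'
  have hS : ∀ᵐ t : ℝ, t ∉ Set.range (fun n : ℤ => (n : ℝ) / x₀) := by
    have hcnt : volume (Set.range (fun n : ℤ => (n : ℝ) / x₀)) = 0 :=
      (Set.countable_range _).measure_zero _
    rw [ae_iff]
    simp only [not_not, Set.setOf_mem_eq]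
    exact hcnt
  filter_upwards [hodd1, hodd2, hS] with t ho1 ho2 hnt
  show g t = 0
  by_contra hgt
  simp only [hg₂def] at ho2
  rw [ho1] at ho2
  have e2 : (Complex.exp (Complex.I * (Real.pi : ℂ) * (x₀ : ℂ) * (t : ℂ))
      - Complex.exp (-(Complex.I * (Real.pi : ℂ) * (x₀ : ℂ) * (t : ℂ)))) * g t = 0 := by
    have hcast : ((-t : ℝ) : ℂ) = -(t : ℂ) := by push_cast; ring
    rw [hcast] at ho2
    have h3 : -(Complex.I * (Real.pi : ℂ) * (x₀ : ℂ) * -(t : ℂ))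
        = Complex.I * (Real.pi : ℂ) * (x₀ : ℂ) * (t : ℂ) := by ring
    rw [h3] at ho2
    linear_combination -ho2
  rcases mul_eq_zero.1 e2 with h' | h'
  · have hexp : Complex.exp (Complex.I * (Real.pi : ℂ) * (x₀ : ℂ) * (t : ℂ))
        = Complex.exp (-(Complex.I * (Real.pi : ℂ) * (x₀ : ℂ) * (t : ℂ))) :=
      sub_eq_zero.mp h'
    rw [Complex.exp_eq_exp_iff_exists_int] at hexp
    obtain ⟨n, hn⟩ := hexp
    apply hnt
    refine ⟨n, ?_⟩
    have hpi : (Real.pi : ℂ) ≠ 0 := Complex.ofReal_ne_zero.2 Real.pi_ne_zero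
    have h2ne : (2 : ℂ) * Complex.I * (Real.pi : ℂ) ≠ 0 := by
      simp [Complex.I_ne_zero, hpi]
    have hxt : (x₀ : ℂ) * (t : ℂ) = (n : ℂ) := by
      apply mul_left_cancel₀ h2ne
      linear_combination hn
    have hreal : x₀ * t = (n : ℝ) := by exact_mod_cast hxt
    field_simp
    linarith [hreal]
  · exact hgt h'
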